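/- With W = X2 w.p. α2 and W = c w.p. 1-α2 (switch independent of everything), and Ū independent of W given (X1,X2,Y), the conditional mutual information satisfies I(Ū, W; X1, X2 | Y) = (1 - α2) I(Ū; X1, X2 | Y) + α2 H(X1, X2 | Y) - α2 H(X1 | Y, Ū, X2). -/
import Mathlib


open scoped Classical
open Real

/-- Probability that random variable `X` takes value `a` under pmf `p` on sample space `Ω`. -/
noncomputable def pr {Ω α : Type} [Fintype Ω] (p : Ω → ℝ) (X : Ω → α) (a : α) : ℝ :=
  ∑ ω, if X ω = a then p ω else 0

/-- Shannon entropy (base 2) of the random variable `X`. -/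
noncomputable def ent {Ω α : Type} [Fintype Ω] [Fintype α] (p : Ω → ℝ) (X : Ω → α) : ℝ :=
  -∑ a, pr p X a * Real.logb 2 (pr p X a)

/-- Conditional entropy `H(X|Y)`. -/
noncomputable def entC {Ω α β : Type} [Fintype Ω] [Fintype α] [Fintype β]
    (p : Ω → ℝ) (X : Ω → α) (Y : Ω → β) : ℝ :=
  ent p (fun ω => (X ω, Y ω)) - ent p Y

/-- Mutual information `I(X;Y)`. -/
noncomputable def mi {Ω α β : Type} [Fintype Ω] [Fintype α] [Fintype β]
    (p : Ω → ℝ) (X : Ω → α) (Y : Ω → β) : ℝ :=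
  ent p X + ent p Y - ent p (fun ω => (X ω, Y ω))

/-- Conditional mutual information `I(X;U|Y)`. -/
noncomputable def miC {Ω α β γ : Type} [Fintype Ω] [Fintype α] [Fintype β] [Fintype γ]
    (p : Ω → ℝ) (X : Ω → α) (U : Ω → β) (Y : Ω → γ) : ℝ :=
  entC p X Y + entC p U Y - entC p (fun ω => (X ω, U ω)) Y

/-- Independence of random variables `X` and `Y` under pmf `p`. -/
def IndepRV {Ω α β : Type} [Fintype Ω] (p : Ω → ℝ) (X : Ω → α) (Y : Ω → β) : Prop :=
  ∀ a b, pr p (fun ω => (X ω, Y ω)) (a, b) = pr p X a * pr p Y b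

/-- With W the randomized response of X2 (parameter α2, switch independent of (X1,X2,Y,Ū)) and
Ū independent of W given (X1,X2,Y):
I(Ū,W;X1,X2|Y) = (1-α2) I(Ū;X1,X2|Y) + α2 H(X1,X2|Y) - α2 H(X1|Y,Ū,X2). -/
lemma pr_total {Ω α : Type} [Fintype Ω] [Fintype α] (p : Ω → ℝ) (hp1 : ∑ ω, p ω = 1)
    (X : Ω → α) : ∑ a, pr p X a = 1 := by
  unfold pr
  rw [Finset.sum_comm]
  simpa using hp1

lemma pr_marginal {Ω ζ β : Type} [Fintype Ω] [Fintype ζ] [Fintype β]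
    (p : Ω → ℝ) (Z : Ω → ζ) (X2 : Ω → β) (z : ζ) :
    ∑ b, pr p (fun ω => (Z ω, X2 ω)) (z, b) = pr p Z z := by
  unfold pr
  rw [Finset.sum_comm]
  refine Finset.sum_congr rfl fun ω _ => ?_
  by_cases h : Z ω = z <;> simp [h, Prod.ext_iff]

lemma mul_logb_mul (c x : ℝ) :
    (c * x) * Real.logb 2 (c * x) = c * (x * Real.logb 2 x) + (c * Real.logb 2 c) * x := by
  rcases eq_or_ne c 0 with hc | hc
  · simp [hc]
  rcases eq_or_ne x 0 with hx | hx
  · simp [hx]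
  rw [Real.logb_mul hc hx]; ring

lemma ent_map_inj {Ω ζ ζ' : Type} [Fintype Ω] [Fintype ζ] [Fintype ζ']
    (p : Ω → ℝ) (Z : Ω → ζ) (g : ζ → ζ') (hg : Function.Injective g) :
    ent p (fun ω => g (Z ω)) = ent p Z := by
  unfold ent
  congr 1
  have hzero : ∀ b ∈ Finset.univ, b ∉ Finset.univ.image g →
      pr p (fun ω => g (Z ω)) b * Real.logb 2 (pr p (fun ω => g (Z ω)) b) = 0 := by
    intro b _ hb
    have h0 : pr p (fun ω => g (Z ω)) b = 0 := by
      unfold pr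
      refine Finset.sum_eq_zero fun ω _ => ?_
      have : g (Z ω) ≠ b := fun h => hb (by simp [← h])
      simp [this]
    simp [h0]
  have hpr : ∀ a, pr p (fun ω => g (Z ω)) (g a) = pr p Z a := by
    intro a; unfold pr; refine Finset.sum_congr rfl fun ω _ => ?_; simp [hg.eq_iff]
  rw [← Finset.sum_subset (Finset.subset_univ (Finset.univ.image g)) hzero,
      Finset.sum_image (fun a _ b _ h => hg h)]
  simp [hpr]

lemma pr_comp {Ω τ τ' : Type} [Fintype Ω] [Fintype τ]
    (p : Ω → ℝ) (T : Ω → τ) (f : τ → τ') (b : τ') :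
    pr p (fun ω => f (T ω)) b = ∑ t, if f t = b then pr p T t else 0 := by
  have key : ∀ ω, (∑ t, if f t = b then (if T ω = t then p ω else 0) else 0)
      = if f (T ω) = b then p ω else 0 := by
    intro ω
    rw [Finset.sum_eq_single (T ω)]
    · simp
    · intro t _ ht
      have : T ω ≠ t := fun h => ht h.symm
      simp [this]
    · simp
  calc pr p (fun ω => f (T ω)) b
      = ∑ ω, (if f (T ω) = b then p ω else 0) := rfl
    _ = ∑ ω, ∑ t, if f t = b then (if T ω = t then p ω else 0) else 0 :=
        Finset.sum_congr rfl fun ω _ => (key ω).symm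
    _ = ∑ t, ∑ ω, if f t = b then (if T ω = t then p ω else 0) else 0 := Finset.sum_comm
    _ = ∑ t, if f t = b then (∑ ω, if T ω = t then p ω else 0) else 0 := by
        refine Finset.sum_congr rfl fun t _ => ?_
        split <;> simp

lemma indep_comp {Ω σ τ τ' : Type} [Fintype Ω] [Fintype σ] [Fintype τ]
    (p : Ω → ℝ) (S : Ω → σ) (T : Ω → τ) (f : τ → τ')
    (h : IndepRV p S T) : IndepRV p S (fun ω => f (T ω)) := by
  intro s b
  have h1 := pr_comp p (fun ω => (S ω, T ω)) (fun st => (st.1, f st.2)) (s, b)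
  rw [pr_comp p T f b, Finset.mul_sum]
  refine Eq.trans (h1.trans ?_) rfl
  rw [Fintype.sum_prod_type]
  rw [Finset.sum_eq_single s]
  · refine Finset.sum_congr rfl fun t _ => ?_
    rw [h s t]
    by_cases hf : f t = b <;> simp [hf, Prod.ext_iff]
  · intro x _ hx
    refine Finset.sum_eq_zero fun t _ => ?_
    simp [Prod.ext_iff, hx]
  · simp

lemma ent_mix {Ω ζ β : Type} [Fintype Ω] [Fintype ζ] [Fintype β]
    (p : Ω → ℝ) (hp1 : ∑ ω, p ω = 1)
    (S : Ω → Bool) (Z : Ω → ζ) (X2 : Ω → β) (α2 : ℝ)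
    (hS : pr p S true = α2)
    (hind : IndepRV p S (fun ω => (Z ω, X2 ω))) :
    ent p (fun ω => (Z ω, (if S ω then some (X2 ω) else none : Option β)))
      = (1 - α2) * ent p Z + α2 * ent p (fun ω => (Z ω, X2 ω))
        - (1 - α2) * Real.logb 2 (1 - α2) - α2 * Real.logb 2 α2 := by
  have hSf : pr p S false = 1 - α2 := by
    have h := pr_total p hp1 S
    rw [Fintype.sum_bool, hS] at h
    linarith
  have hnone : ∀ z : ζ, pr p (fun ω => (Z ω, (if S ω then some (X2 ω) else none : Option β))) (z, none)
      = (1 - α2) * pr p Z z := by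
    intro z
    have e1 : pr p (fun ω => (Z ω, (if S ω then some (X2 ω) else none : Option β))) (z, none)
        = ∑ b, pr p (fun ω => (S ω, (Z ω, X2 ω))) (false, (z, b)) := by
      unfold pr
      rw [Finset.sum_comm]
      refine Finset.sum_congr rfl fun ω _ => ?_
      cases hs : S ω <;> by_cases hz : Z ω = z <;> simp [hs, hz, Prod.ext_iff]
    rw [e1]
    have e2 : ∀ b, pr p (fun ω => (S ω, (Z ω, X2 ω))) (false, (z, b))
        = (1 - α2) * pr p (fun ω => (Z ω, X2 ω)) (z, b) := by
      intro b; rw [hind false (z, b), hSf]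
    simp only [e2]
    rw [← Finset.mul_sum, pr_marginal]
  have hsome : ∀ (z : ζ) (b : β),
      pr p (fun ω => (Z ω, (if S ω then some (X2 ω) else none : Option β))) (z, some b)
      = α2 * pr p (fun ω => (Z ω, X2 ω)) (z, b) := by
    intro z b
    have e1 : pr p (fun ω => (Z ω, (if S ω then some (X2 ω) else none : Option β))) (z, some b)
        = pr p (fun ω => (S ω, (Z ω, X2 ω))) (true, (z, b)) := by
      unfold pr
      refine Finset.sum_congr rfl fun ω _ => ?_
      cases hs : S ω <;> simp [hs, Prod.ext_iff, and_comm]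
    rw [e1, hind true (z, b), hS]
  unfold ent
  rw [Fintype.sum_prod_type]
  have step : ∀ z : ζ, (∑ w : Option β,
        pr p (fun ω => (Z ω, (if S ω then some (X2 ω) else none : Option β))) (z, w) *
          Real.logb 2 (pr p (fun ω => (Z ω, (if S ω then some (X2 ω) else none : Option β))) (z, w)))
      = ((1 - α2) * (pr p Z z * Real.logb 2 (pr p Z z))
          + ((1 - α2) * Real.logb 2 (1 - α2)) * pr p Z z)
        + ∑ b, (α2 * (pr p (fun ω => (Z ω, X2 ω)) (z, b) * Real.logb 2 (pr p (fun ω => (Z ω, X2 ω)) (z, b)))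
          + (α2 * Real.logb 2 α2) * pr p (fun ω => (Z ω, X2 ω)) (z, b)) := by
    intro z
    rw [Fintype.sum_option]
    rw [hnone z, mul_logb_mul]
    congr 1
    refine Finset.sum_congr rfl fun b _ => ?_
    rw [hsome z b, mul_logb_mul]
  simp only [step]
  rw [Finset.sum_add_distrib, Finset.sum_add_distrib, ← Finset.mul_sum, ← Finset.mul_sum,
      pr_total p hp1 Z]
  have hsum2 : ∑ z, ∑ b, (α2 * (pr p (fun ω => (Z ω, X2 ω)) (z, b) * Real.logb 2 (pr p (fun ω => (Z ω, X2 ω)) (z, b)))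
          + (α2 * Real.logb 2 α2) * pr p (fun ω => (Z ω, X2 ω)) (z, b))
      = α2 * (∑ zb : ζ × β, pr p (fun ω => (Z ω, X2 ω)) zb * Real.logb 2 (pr p (fun ω => (Z ω, X2 ω)) zb))
        + (α2 * Real.logb 2 α2) * (∑ zb : ζ × β, pr p (fun ω => (Z ω, X2 ω)) zb) := by
    rw [Fintype.sum_prod_type, Fintype.sum_prod_type, Finset.mul_sum, Finset.mul_sum,
        ← Finset.sum_add_distrib]
    refine Finset.sum_congr rfl fun z _ => ?_
    rw [Finset.mul_sum, Finset.mul_sum, ← Finset.sum_add_distrib]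
  rw [hsum2, pr_total p hp1 (fun ω => (Z ω, X2 ω))]
  ring

set_option maxHeartbeats 2000000

theorem randomized_response_cond_mi {Ω α β γ δ : Type}
    [Fintype Ω] [Fintype α] [Fintype β] [Fintype γ] [Fintype δ]
    (p : Ω → ℝ) (hp0 : ∀ ω, 0 ≤ p ω) (hp1 : ∑ ω, p ω = 1)
    (X1 : Ω → α) (X2 : Ω → β) (Y : Ω → δ) (U : Ω → γ) (S : Ω → Bool) (α2 : ℝ)
    (hα0 : 0 ≤ α2) (hα1 : α2 ≤ 1) (hS : pr p S true = α2)
    (hSind : IndepRV p S (fun ω => (X1 ω, X2 ω, Y ω, U ω)))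
    (hUcond : miC p U (fun ω => (if S ω then some (X2 ω) else none : Option β))
      (fun ω => (X1 ω, X2 ω, Y ω)) = 0) :
    miC p (fun ω => (U ω, (if S ω then some (X2 ω) else none : Option β)))
        (fun ω => (X1 ω, X2 ω)) Y =
      (1 - α2) * miC p U (fun ω => (X1 ω, X2 ω)) Y
        + α2 * entC p (fun ω => (X1 ω, X2 ω)) Y
        - α2 * entC p X1 (fun ω => (Y ω, U ω, X2 ω)) := by
  have hind1 : IndepRV p S (fun ω => ((U ω, Y ω), X2 ω)) :=
    indep_comp p S (fun ω => (X1 ω, X2 ω, Y ω, U ω))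
      (fun t => ((t.2.2.2, t.2.2.1), t.2.1)) hSind
  have hind2 : IndepRV p S (fun ω => (((U ω, (X1 ω, X2 ω)), Y ω), X2 ω)) :=
    indep_comp p S (fun ω => (X1 ω, X2 ω, Y ω, U ω))
      (fun t => (((t.2.2.2, (t.1, t.2.1)), t.2.2.1), t.2.1)) hSind
  have hg1 : Function.Injective (fun x : (γ × δ) × Option β => ((x.1.1, x.2), x.1.2)) :=
    Function.LeftInverse.injective
      (g := fun y : (γ × Option β) × δ => ((y.1.1, y.2), y.1.2)) (fun x => rfl)
  have hg2 : Function.Injective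
      (fun t : ((γ × (α × β)) × δ) × Option β => (((t.1.1.1, t.2), t.1.1.2), t.1.2)) :=
    Function.LeftInverse.injective
      (g := fun y : ((γ × Option β) × (α × β)) × δ => (((y.1.1.1, y.1.2), y.2), y.1.1.2))
      (fun x => rfl)
  have hg3 : Function.Injective (fun t : (γ × (α × β)) × δ => (t, t.1.2.2)) :=
    Function.LeftInverse.injective (g := Prod.fst) (fun x => rfl)
  have hg4 : Function.Injective (fun t : δ × (γ × β) => ((t.2.1, t.1), t.2.2)) :=
    Function.LeftInverse.injective
      (g := fun y : (γ × δ) × β => (y.1.2, (y.1.1, y.2))) (fun x => rfl)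
  have hg5 : Function.Injective (fun t : α × (δ × (γ × β)) => ((t.2.2.1, (t.1, t.2.2.2)), t.2.1)) :=
    Function.LeftInverse.injective
      (g := fun y : (γ × (α × β)) × δ => (y.1.2.1, (y.2, (y.1.1, y.1.2.2)))) (fun x => rfl)
  have E1 : ent p (fun ω => ((U ω, (if S ω then some (X2 ω) else none : Option β)), Y ω))
      = ent p (fun ω => ((U ω, Y ω), (if S ω then some (X2 ω) else none : Option β))) :=
    ent_map_inj p (fun ω => ((U ω, Y ω), (if S ω then some (X2 ω) else none : Option β)))
      _ hg1
  have E1b : ent p (fun ω => ((U ω, Y ω), (if S ω then some (X2 ω) else none : Option β)))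
      = (1 - α2) * ent p (fun ω => (U ω, Y ω))
        + α2 * ent p (fun ω => ((U ω, Y ω), X2 ω))
        - (1 - α2) * Real.logb 2 (1 - α2) - α2 * Real.logb 2 α2 :=
    ent_mix p hp1 S (fun ω => (U ω, Y ω)) X2 α2 hS hind1
  have E1c : ent p (fun ω => ((U ω, Y ω), X2 ω)) = ent p (fun ω => (Y ω, U ω, X2 ω)) :=
    ent_map_inj p (fun ω => (Y ω, U ω, X2 ω)) _ hg4
  have E2a : ent p (fun ω =>
        (((U ω, (if S ω then some (X2 ω) else none : Option β)), (X1 ω, X2 ω)), Y ω))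
      = ent p (fun ω =>
        (((U ω, (X1 ω, X2 ω)), Y ω), (if S ω then some (X2 ω) else none : Option β))) :=
    ent_map_inj p (fun ω =>
      (((U ω, (X1 ω, X2 ω)), Y ω), (if S ω then some (X2 ω) else none : Option β))) _ hg2
  have E2b : ent p (fun ω =>
        (((U ω, (X1 ω, X2 ω)), Y ω), (if S ω then some (X2 ω) else none : Option β)))
      = (1 - α2) * ent p (fun ω => ((U ω, (X1 ω, X2 ω)), Y ω))
        + α2 * ent p (fun ω => (((U ω, (X1 ω, X2 ω)), Y ω), X2 ω))
        - (1 - α2) * Real.logb 2 (1 - α2) - α2 * Real.logb 2 α2 :=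
    ent_mix p hp1 S (fun ω => ((U ω, (X1 ω, X2 ω)), Y ω)) X2 α2 hS hind2
  have E2c : ent p (fun ω => (((U ω, (X1 ω, X2 ω)), Y ω), X2 ω))
      = ent p (fun ω => ((U ω, (X1 ω, X2 ω)), Y ω)) :=
    ent_map_inj p (fun ω => ((U ω, (X1 ω, X2 ω)), Y ω)) _ hg3
  have E3 : ent p (fun ω => ((U ω, (X1 ω, X2 ω)), Y ω))
      = ent p (fun ω => (X1 ω, (Y ω, U ω, X2 ω))) :=
    ent_map_inj p (fun ω => (X1 ω, (Y ω, U ω, X2 ω))) _ hg5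
  simp only [miC, entC]
  rw [E1, E1b, E1c, E2a, E2b, E2c, E3]
  ring
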